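/- arXiv:2008.07214 — 3 statements merged into one kernel-verified Lean document; each statement's English description precedes it below -/
import Mathlib

section
/- Let p ≥ 1, let g : ℝ^p → ℝ be convex and K-Lipschitz with respect to the Euclidean norm, let D be a p×p diagonal matrix whose diagonal entries all lie in [c₁, c₂] with 0 < c₁ ≤ c₂, let γ > 0, and let β ∈ ℝ^p. If q minimizes x ↦ g(x) + (1/(2γ)) ‖x − β‖_D² over ℝ^p, then (1/γ) ‖q − β‖_D² ≤ g(β) − g(q) ≤ K ‖q − β‖, and consequently ‖q − β‖ ≤ γK/c₁ (in the Euclidean norm). -/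
open scoped BigOperators
open MeasureTheory Filter

noncomputable def dInner {p : ℕ} (d : Fin p → ℝ) (x y : EuclideanSpace ℝ (Fin p)) : ℝ :=
  ∑ i, d i * x i * y i

noncomputable def dNorm {p : ℕ} (d : Fin p → ℝ) (x : EuclideanSpace ℝ (Fin p)) : ℝ :=
  Real.sqrt (dInner d x x)

noncomputable def dInvMul {p : ℕ} (d : Fin p → ℝ) (v : EuclideanSpace ℝ (Fin p)) :
    EuclideanSpace ℝ (Fin p) :=
  WithLp.toLp 2 (fun i => (d i)⁻¹ * v i)

lemma dInner_self_nonneg {p : ℕ} {c₁ : ℝ} (hc₁ : 0 < c₁) {d : Fin p → ℝ}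
    (hd : ∀ i, c₁ ≤ d i) (v : EuclideanSpace ℝ (Fin p)) : 0 ≤ dInner d v v := by
  apply Finset.sum_nonneg
  intro i _
  have := (hc₁.trans_le (hd i)).le
  nlinarith [sq_nonneg (v i)]

lemma dInner_smul_self {p : ℕ} (d : Fin p → ℝ) (c : ℝ) (v : EuclideanSpace ℝ (Fin p)) :
    dInner d (c • v) (c • v) = c ^ 2 * dInner d v v := by
  simp only [dInner, PiLp.smul_apply, smul_eq_mul, Finset.mul_sum]
  exact Finset.sum_congr rfl fun i _ => by ring

/-- If `g` is convex and K-Lipschitz (Euclidean norm), the diagonal entries of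
`D` lie in `[c₁, c₂]` with `0 < c₁ ≤ c₂`, and `q = Prox_{γ,g}^D(β)`, then
`(1/γ) ‖q − β‖_D² ≤ g β − g q ≤ K ‖q − β‖` and consequently `‖q − β‖ ≤ γK/c₁`. -/
theorem stmt_3 {p : ℕ} (hp : 1 ≤ p)
    (g : EuclideanSpace ℝ (Fin p) → ℝ) (hg : ConvexOn ℝ Set.univ g)
    (K : ℝ) (hK : ∀ x y : EuclideanSpace ℝ (Fin p), |g x - g y| ≤ K * ‖x - y‖)
    (c₁ c₂ : ℝ) (hc₁ : 0 < c₁) (hc₁₂ : c₁ ≤ c₂)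
    (d : Fin p → ℝ) (hd : ∀ i, d i ∈ Set.Icc c₁ c₂)
    (γ : ℝ) (hγ : 0 < γ)
    (β q : EuclideanSpace ℝ (Fin p))
    (hq : ∀ x : EuclideanSpace ℝ (Fin p),
      g q + (1 / (2 * γ)) * (dNorm d (q - β)) ^ 2 ≤
        g x + (1 / (2 * γ)) * (dNorm d (x - β)) ^ 2) :
    (1 / γ) * (dNorm d (q - β)) ^ 2 ≤ g β - g q ∧
      g β - g q ≤ K * ‖q - β‖ ∧
      ‖q - β‖ ≤ γ * K / c₁ := by
  have hd1 : ∀ i, c₁ ≤ d i := fun i => (hd i).1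
  set A : ℝ := dInner d (q - β) (q - β) with hAdef
  have hA0 : 0 ≤ A := dInner_self_nonneg hc₁ hd1 _
  have hsq : (dNorm d (q - β)) ^ 2 = A := Real.sq_sqrt hA0
  set B : ℝ := g β - g q with hBdef
  -- Step 1: for all t ∈ (0,1], ((2 - t)/(2γ)) * A ≤ B
  have step1 : ∀ t : ℝ, 0 < t → t ≤ 1 → ((2 - t) / (2 * γ)) * A ≤ B := by
    intro t ht0 ht1
    have h := hq ((1 - t) • q + t • β)
    have hsub : ((1 - t) • q + t • β) - β = (1 - t) • (q - β) := by
      module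
    rw [hsub] at h
    have hsq2 : (dNorm d ((1 - t) • (q - β))) ^ 2 = (1 - t) ^ 2 * A := by
      rw [dNorm, Real.sq_sqrt, dInner_smul_self]
      rw [dInner_smul_self]
      positivity
    rw [hsq2, hsq] at h
    have hconv := hg.2 (Set.mem_univ q) (Set.mem_univ β) (by linarith : (0:ℝ) ≤ 1 - t)
      ht0.le (by ring : (1 - t) + t = 1)
    simp only [smul_eq_mul] at hconv
    have hγ' : 0 < 2 * γ := by linarith
    rw [div_mul_eq_mul_div, div_le_iff₀ hγ']
    have h2 : g q + (1 / (2 * γ)) * A ≤ (1 - t) * g q + t * g β + (1 / (2 * γ)) * ((1 - t) ^ 2 * A) :=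
      h.trans (by linarith)
    have key : (1 / (2 * γ)) * (t * (2 - t) * A) ≤ t * B := by
      have : 1 - (1 - t)^2 = t * (2 - t) := by ring
      nlinarith [h2]
    rw [div_mul_eq_mul_div, div_le_iff₀ hγ'] at key
    nlinarith [key]
  -- Step 2: (1/γ) * A ≤ B
  have step2 : (1 / γ) * A ≤ B := by
    refine le_of_forall_pos_le_add ?_
    intro ε hε
    set t : ℝ := min 1 (2 * γ * ε / (A + 1)) with htdef
    have ht0 : 0 < t := lt_min one_pos (by positivity)
    have ht1 : t ≤ 1 := min_le_left _ _
    have h1 := step1 t ht0 ht1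
    have h2 : t ≤ 2 * γ * ε / (A + 1) := min_le_right _ _
    have h3 : t * (A + 1) ≤ 2 * γ * ε := (le_div_iff₀ (by positivity)).mp h2
    have h4 : t * A ≤ 2 * γ * ε := by nlinarith
    have : (1 / γ) * A - (t / (2 * γ)) * A ≤ B := by
      have : ((2 - t) / (2 * γ)) * A = (1 / γ) * A - (t / (2 * γ)) * A := by
        field_simp
      linarith [h1, this.symm.le, this.le]
    have h5 : (t / (2 * γ)) * A ≤ ε := by
      rw [div_mul_eq_mul_div, div_le_iff₀ (by linarith : (0:ℝ) < 2 * γ)]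
      nlinarith
    linarith
  have step2' : (1 / γ) * (dNorm d (q - β)) ^ 2 ≤ B := by rw [hsq]; exact step2
  -- Step 3
  have step3 : B ≤ K * ‖q - β‖ := by
    have := hK β q
    rw [show ‖β - q‖ = ‖q - β‖ from norm_sub_rev β q] at this
    exact (le_abs_self _).trans this
  -- K ≥ 0
  have hK0 : 0 ≤ K := by
    have hx : (0:ℝ) < ‖(EuclideanSpace.single (⟨0, hp⟩ : Fin p) (1:ℝ)) - 0‖ := by
      rw [sub_zero]
      simp [EuclideanSpace.norm_single]
    have h := (abs_nonneg _).trans (hK (EuclideanSpace.single (⟨0, hp⟩ : Fin p) (1:ℝ)) 0)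
    nlinarith
  -- Step 4
  have hnormsq : ‖q - β‖ ^ 2 = ∑ i, (q - β) i ^ 2 := by
    rw [EuclideanSpace.norm_eq, Real.sq_sqrt (by positivity)]
    exact Finset.sum_congr rfl fun i _ => by rw [Real.norm_eq_abs, sq_abs]
  have step4 : c₁ * ‖q - β‖ ^ 2 ≤ A := by
    rw [hnormsq, Finset.mul_sum]
    apply Finset.sum_le_sum
    intro i _
    have := hd1 i
    nlinarith [sq_nonneg ((q - β) i)]
  have final : ‖q - β‖ ≤ γ * K / c₁ := by
    rw [le_div_iff₀ hc₁]
    set n := ‖q - β‖ with hn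
    rcases eq_or_lt_of_le (norm_nonneg (q - β)) with h0 | h0
    · rw [hn, ← h0, zero_mul]; positivity
    · have hAB : A ≤ γ * B := by
        have h := step2
        rw [div_mul_eq_mul_div, div_le_iff₀ hγ] at h
        linarith
      have hchain : c₁ * n ^ 2 ≤ γ * (K * n) := by
        have h3 := mul_le_mul_of_nonneg_left step3 hγ.le
        linarith
      rw [← hn] at h0
      nlinarith
  exact ⟨step2', step3, final⟩
end

section
/- Let p ≥ 1, let h : ℝ^p → ℝ be convex and differentiable with ∇h Lipschitz continuous with constant L > 0 (Euclidean norm), let g : ℝ^p → ℝ be convex, and set F = h + g. Let D be a p×p diagonal matrix whose diagonal entries all lie in [c₁, c₂] with 0 < c₁ ≤ c₂, and let γ ∈ (0, c₁/L]. Let β, β⋆, G ∈ ℝ^p, set η = D⁻¹ G − D⁻¹ ∇h(β), and let β⁺ be a minimizer over ℝ^p of x ↦ g(x) + (1/(2γ)) ‖x − (β − γ D⁻¹ G)‖_D². Then ‖β⁺ − β⋆‖_D² ≤ ‖β − β⋆‖_D² − 2γ (F(β⁺) − F(β⋆)) − 2γ ⟨β⁺ − β⋆, η⟩_D. -/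
open scoped BigOperators
open MeasureTheory Filter Topology

section aux
open scoped RealInnerProductSpace
variable {p : ℕ}

lemma dInner_nonneg (d : Fin p → ℝ) (hd : ∀ i, 0 ≤ d i) (x : EuclideanSpace ℝ (Fin p)) :
    0 ≤ dInner d x x :=
  Finset.sum_nonneg fun i _ => by nlinarith [hd i, mul_self_nonneg (x i)]

lemma dNorm_sq (d : Fin p → ℝ) (hd : ∀ i, 0 ≤ d i) (x : EuclideanSpace ℝ (Fin p)) :
    dNorm d x ^ 2 = dInner d x x :=
  Real.sq_sqrt (dInner_nonneg d hd x)

lemma dInner_comm (d : Fin p → ℝ) (x y : EuclideanSpace ℝ (Fin p)) :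
    dInner d x y = dInner d y x :=
  Finset.sum_congr rfl fun i _ => by ring

lemma dInner_sub_left (d : Fin p → ℝ) (x y z : EuclideanSpace ℝ (Fin p)) :
    dInner d (x - y) z = dInner d x z - dInner d y z := by
  simp only [dInner, ← Finset.sum_sub_distrib]
  exact Finset.sum_congr rfl fun i _ => by
    simp only [PiLp.sub_apply]; ring

lemma dInner_sub_right (d : Fin p → ℝ) (x y z : EuclideanSpace ℝ (Fin p)) :
    dInner d x (y - z) = dInner d x y - dInner d x z := by
  simp only [dInner, ← Finset.sum_sub_distrib]
  exact Finset.sum_congr rfl fun i _ => by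
    simp only [PiLp.sub_apply]; ring

lemma dInner_smul_left (d : Fin p → ℝ) (t : ℝ) (x y : EuclideanSpace ℝ (Fin p)) :
    dInner d (t • x) y = t * dInner d x y := by
  simp only [dInner, Finset.mul_sum]
  exact Finset.sum_congr rfl fun i _ => by
    simp only [PiLp.smul_apply, smul_eq_mul]; ring

lemma dInner_expand (d : Fin p → ℝ) (a b : EuclideanSpace ℝ (Fin p)) (t : ℝ) :
    dInner d (a + t • b) (a + t • b)
      = dInner d a a + 2 * t * dInner d a b + t ^ 2 * dInner d b b := by
  simp only [dInner, Finset.mul_sum, ← Finset.sum_add_distrib]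
  exact Finset.sum_congr rfl fun i _ => by
    simp only [PiLp.add_apply, PiLp.smul_apply, smul_eq_mul]; ring

lemma dInner_three (d : Fin p → ℝ) (a b c : EuclideanSpace ℝ (Fin p)) :
    dInner d (a - c) (a - c)
      = dInner d (a - b) (a - b) + 2 * dInner d (a - b) (b - c) + dInner d (b - c) (b - c) := by
  simp only [dInner, Finset.mul_sum, ← Finset.sum_add_distrib]
  exact Finset.sum_congr rfl fun i _ => by
    simp only [PiLp.sub_apply]; ring

lemma dInner_flip (d : Fin p → ℝ) (x y : EuclideanSpace ℝ (Fin p)) :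
    dInner d (x - y) (x - y) = dInner d (y - x) (y - x) :=
  Finset.sum_congr rfl fun i _ => by simp only [PiLp.sub_apply]; ring

lemma real_inner_eq_sum (x y : EuclideanSpace ℝ (Fin p)) :
    ⟪x, y⟫ = ∑ i, x i * y i := by
  simp [PiLp.inner_apply, RCLike.inner_apply, mul_comm]

lemma dInner_dInvMul (d : Fin p → ℝ) (hd : ∀ i, d i ≠ 0) (u w : EuclideanSpace ℝ (Fin p)) :
    dInner d (dInvMul d u) w = ⟪u, w⟫ := by
  rw [real_inner_eq_sum]
  refine Finset.sum_congr rfl fun i _ => ?_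
  have hi : (dInvMul d u) i = (d i)⁻¹ * u i := rfl
  rw [hi]
  field_simp
  rw [div_eq_iff (hd i)]
  ring

lemma norm_sq_eq_sum (x : EuclideanSpace ℝ (Fin p)) :
    ‖x‖ ^ 2 = ∑ i, x i * x i := by
  rw [← real_inner_self_eq_norm_sq, real_inner_eq_sum]

lemma c1_le_dInner (d : Fin p → ℝ) (c₁ : ℝ) (hd : ∀ i, c₁ ≤ d i) (x : EuclideanSpace ℝ (Fin p)) :
    c₁ * ‖x‖ ^ 2 ≤ dInner d x x := by
  rw [norm_sq_eq_sum, Finset.mul_sum]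
  exact Finset.sum_le_sum fun i _ => by nlinarith [hd i, mul_self_nonneg (x i)]

lemma nonneg_aux (a b : ℝ) (H : ∀ t : ℝ, 0 < t → t < 1 → 0 ≤ a + t * b) : 0 ≤ a := by
  by_contra hc
  push_neg at hc
  rcases le_or_gt b 0 with hb | hb
  · have := H (1/2) (by norm_num) (by norm_num); nlinarith
  · have ht1 : 0 < -a / (2 * b) := div_pos (by linarith) (by linarith)
    set t := min (1/2) (-a / (2 * b)) with ht
    have ht0 : 0 < t := lt_min (by norm_num) ht1
    have hH := H t ht0 (lt_of_le_of_lt (min_le_left _ _) (by norm_num))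
    have h2 : t * b ≤ (-a / (2 * b)) * b :=
      mul_le_mul_of_nonneg_right (min_le_right _ _) hb.le
    have h3 : (-a / (2 * b)) * b = -a / 2 := by field_simp
    nlinarith

lemma line_hasDerivAt (h : EuclideanSpace ℝ (Fin p) → ℝ)
    (h' : EuclideanSpace ℝ (Fin p) → EuclideanSpace ℝ (Fin p))
    (hdiff : ∀ x, HasGradientAt h (h' x) x)
    (x v : EuclideanSpace ℝ (Fin p)) (t : ℝ) :
    HasDerivAt (fun s : ℝ => h (x + s • v)) ⟪h' (x + t • v), v⟫ t := by
  have hc : HasDerivAt (fun s : ℝ => x + s • v) v t := by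
    simpa using ((hasDerivAt_id t).smul_const v).const_add x
  have := (hdiff (x + t • v)).hasFDerivAt.comp_hasDerivAt t hc
  simp [InnerProductSpace.toDual_apply_apply] at this
  exact this

lemma convex_grad_ineq (h : EuclideanSpace ℝ (Fin p) → ℝ)
    (h' : EuclideanSpace ℝ (Fin p) → EuclideanSpace ℝ (Fin p))
    (hconv : ConvexOn ℝ Set.univ h)
    (hdiff : ∀ x, HasGradientAt h (h' x) x)
    (x y : EuclideanSpace ℝ (Fin p)) :
    h x + ⟪h' x, y - x⟫ ≤ h y := by
  set v := y - x with hv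
  have hline : HasDerivAt (fun s : ℝ => h (x + s • v)) ⟪h' x, v⟫ 0 := by
    have := line_hasDerivAt h h' hdiff x v 0
    simpa using this
  have hslope := hasDerivAt_iff_tendsto_slope.mp hline
  have h2 : Tendsto (slope (fun s : ℝ => h (x + s • v)) 0) (𝓝[>] (0:ℝ)) (𝓝 ⟪h' x, v⟫) :=
    hslope.mono_left (nhdsWithin_mono 0 (fun t ht => ne_of_gt ht))
  have hub : ∀ᶠ t in 𝓝[>] (0:ℝ), slope (fun s : ℝ => h (x + s • v)) 0 t ≤ h y - h x := by
    filter_upwards [Ioo_mem_nhdsGT_of_mem (Set.mem_Ico.2 ⟨le_rfl, one_pos⟩)] with t ht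
    have e2 : x + t • v = (1 - t) • x + t • y := by
      rw [hv]; module
    have hcv : h (x + t • v) ≤ (1 - t) * h x + t * h y := by
      rw [e2]
      exact hconv.2 (Set.mem_univ x) (Set.mem_univ y) (by linarith [ht.2]) ht.1.le (by ring)
    have hsl : slope (fun s : ℝ => h (x + s • v)) 0 t = (h (x + t • v) - h x) / t := by
      rw [slope_def_field]
      simp
    rw [hsl, div_le_iff₀ ht.1]
    nlinarith [ht.1, hcv]
  have := le_of_tendsto h2 hub
  linarith

lemma descent_lemma (h : EuclideanSpace ℝ (Fin p) → ℝ)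
    (h' : EuclideanSpace ℝ (Fin p) → EuclideanSpace ℝ (Fin p))
    (hdiff : ∀ x, HasGradientAt h (h' x) x)
    (L : ℝ) (hL : 0 < L)
    (hlip : ∀ x y : EuclideanSpace ℝ (Fin p), ‖h' x - h' y‖ ≤ L * ‖x - y‖)
    (x y : EuclideanSpace ℝ (Fin p)) :
    h y ≤ h x + ⟪h' x, y - x⟫ + L / 2 * ‖y - x‖ ^ 2 := by
  set v := y - x with hv
  set c : ℝ := ⟪h' x, v⟫ with hc
  set ψ : ℝ → ℝ := fun t => h (x + t • v) - t * c - (L / 2 * ‖v‖ ^ 2) * t ^ 2 with hψ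
  have hψd : ∀ t : ℝ, HasDerivAt ψ (⟪h' (x + t • v), v⟫ - c - L * ‖v‖ ^ 2 * t) t := by
    intro t
    have h1 := line_hasDerivAt h h' hdiff x v t
    have h2 : HasDerivAt (fun s : ℝ => s * c) c t := by
      simpa using (hasDerivAt_id t).mul_const c
    have h3 : HasDerivAt (fun s : ℝ => (L / 2 * ‖v‖ ^ 2) * s ^ 2) (L * ‖v‖ ^ 2 * t) t := by
      have := (hasDerivAt_pow 2 t).const_mul (L / 2 * ‖v‖ ^ 2)
      refine this.congr_deriv ?_
      push_cast
      ring
    exact (h1.sub h2).sub h3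
  have hderiv_nonpos : ∀ t ∈ Set.Ioi (0:ℝ), deriv ψ t ≤ 0 := by
    intro t ht
    rw [(hψd t).deriv]
    have h4 : ⟪h' (x + t • v) - h' x, v⟫ ≤ ‖h' (x + t • v) - h' x‖ * ‖v‖ :=
      real_inner_le_norm _ _
    have h5 : ‖h' (x + t • v) - h' x‖ ≤ L * ‖t • v‖ := by
      have := hlip (x + t • v) x
      simpa using this
    have h6 : ‖t • v‖ = t * ‖v‖ := by
      rw [norm_smul]; simp [abs_of_pos (Set.mem_Ioi.mp ht)]
    have h7 : ⟪h' (x + t • v), v⟫ - c = ⟪h' (x + t • v) - h' x, v⟫ := by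
      rw [inner_sub_left, hc]
    have hn : (0:ℝ) ≤ ‖v‖ := norm_nonneg v
    rw [h6] at h5
    nlinarith [Set.mem_Ioi.mp ht]
  have hanti : AntitoneOn ψ (Set.Ici (0:ℝ)) := by
    apply antitoneOn_of_deriv_nonpos (convex_Ici 0)
    · exact fun t _ => ((hψd t).differentiableAt).continuousAt.continuousWithinAt
    · exact fun t _ => ((hψd t).differentiableAt).differentiableWithinAt
    · intro t ht
      rw [interior_Ici] at ht
      exact hderiv_nonpos t ht
  have hkey := hanti (Set.mem_Ici.2 le_rfl) (Set.mem_Ici.2 zero_le_one) zero_le_one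
  have e0 : ψ 0 = h x := by simp [hψ]
  have e1 : ψ 1 = h y - c - L / 2 * ‖v‖ ^ 2 := by
    have hxy : x + (1:ℝ) • v = y := by rw [hv]; module
    simp only [hψ, hxy, one_pow, mul_one, one_mul]
  rw [e0, e1] at hkey
  linarith

end aux

open scoped RealInnerProductSpace in
/-- One-step descent inequality for the quasi-Newton stochastic proximal update
`β⁺ = Prox_{γ,g}^D(β − γ D⁻¹ G)` with `η = D⁻¹G − D⁻¹∇h(β)`:
`‖β⁺ − β⋆‖_D² ≤ ‖β − β⋆‖_D² − 2γ(F(β⁺) − F(β⋆)) − 2γ⟨β⁺ − β⋆, η⟩_D`. -/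
theorem stmt_5 {p : ℕ} (hp : 1 ≤ p)
    (h g : EuclideanSpace ℝ (Fin p) → ℝ)
    (h' : EuclideanSpace ℝ (Fin p) → EuclideanSpace ℝ (Fin p))
    (hh : ConvexOn ℝ Set.univ h)
    (hdiff : ∀ x, HasGradientAt h (h' x) x)
    (L : ℝ) (hL : 0 < L)
    (hlip : ∀ x y : EuclideanSpace ℝ (Fin p), ‖h' x - h' y‖ ≤ L * ‖x - y‖)
    (hg : ConvexOn ℝ Set.univ g)
    (c₁ c₂ : ℝ) (hc₁ : 0 < c₁) (hc₁₂ : c₁ ≤ c₂)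
    (d : Fin p → ℝ) (hd : ∀ i, d i ∈ Set.Icc c₁ c₂)
    (γ : ℝ) (hγ : 0 < γ) (hγL : γ ≤ c₁ / L)
    (β βstar G βplus : EuclideanSpace ℝ (Fin p))
    (hβplus : ∀ x : EuclideanSpace ℝ (Fin p),
      g βplus + (1 / (2 * γ)) * (dNorm d (βplus - (β - γ • dInvMul d G))) ^ 2 ≤
        g x + (1 / (2 * γ)) * (dNorm d (x - (β - γ • dInvMul d G))) ^ 2) :
    (dNorm d (βplus - βstar)) ^ 2 ≤
      (dNorm d (β - βstar)) ^ 2 -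
        2 * γ * ((h βplus + g βplus) - (h βstar + g βstar)) -
        2 * γ * dInner d (βplus - βstar) (dInvMul d G - dInvMul d (h' β)) := by
  have hd0 : ∀ i, 0 ≤ d i := fun i => le_trans hc₁.le (hd i).1
  have hdne : ∀ i, d i ≠ 0 := fun i => ne_of_gt (lt_of_lt_of_le hc₁ (hd i).1)
  have hγ0 : γ ≠ 0 := ne_of_gt hγ
  set z : EuclideanSpace ℝ (Fin p) := β - γ • dInvMul d G with hz
  set cγ : ℝ := 1 / (2 * γ) with hcγ
  have hcγ0 : 0 < cγ := by rw [hcγ]; positivity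
  -- optimality of βplus for the prox problem
  have hopt : ∀ x : EuclideanSpace ℝ (Fin p),
      0 ≤ g x - g βplus + 2 * cγ * dInner d (βplus - z) (x - βplus) := by
    intro x
    apply nonneg_aux _ (cγ * dInner d (x - βplus) (x - βplus))
    intro t ht0 ht1
    have key := hβplus (βplus + t • (x - βplus))
    rw [dNorm_sq d hd0, dNorm_sq d hd0] at key
    have e1 : βplus + t • (x - βplus) - z = (βplus - z) + t • (x - βplus) := by abel
    rw [e1, dInner_expand] at key
    have hcv : g (βplus + t • (x - βplus)) ≤ (1 - t) * g βplus + t * g x := by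
      have e2 : βplus + t • (x - βplus) = (1 - t) • βplus + t • x := by module
      rw [e2]
      exact hg.2 (Set.mem_univ βplus) (Set.mem_univ x) (by linarith) ht0.le (by ring)
    set A0 := dInner d (βplus - z) (βplus - z)
    set A1 := dInner d (βplus - z) (x - βplus)
    set A2 := dInner d (x - βplus) (x - βplus)
    have hdist : cγ * (A0 + 2 * t * A1 + t ^ 2 * A2)
        = cγ * A0 + 2 * cγ * (t * A1) + cγ * (t ^ 2 * A2) := by ring
    have hs : 0 ≤ t * ((g x - g βplus + 2 * cγ * A1) + t * (cγ * A2)) := by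
      have expand : t * ((g x - g βplus + 2 * cγ * A1) + t * (cγ * A2))
          = t * g x - t * g βplus + 2 * cγ * (t * A1) + cγ * (t ^ 2 * A2) := by ring
      rw [expand]
      nlinarith [key, hcv]
    by_contra hcon
    push_neg at hcon
    linarith [hs, mul_neg_of_pos_of_neg ht0 hcon]
  -- D-inner-product forms of gradient terms
  set H : EuclideanSpace ℝ (Fin p) := dInvMul d (h' β) with hH
  set Gd : EuclideanSpace ℝ (Fin p) := dInvMul d G with hGd
  have hHinner : ∀ w : EuclideanSpace ℝ (Fin p), dInner d H w = ⟪h' β, w⟫ :=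
    fun w => dInner_dInvMul d hdne (h' β) w
  -- descent lemma with D-norm bound
  have hdesc : h βplus ≤ h β + dInner d H (βplus - β)
      + cγ * dInner d (βplus - β) (βplus - β) := by
    have h1 := descent_lemma h h' hdiff L hL hlip β βplus
    have h2 : L / 2 * ‖βplus - β‖ ^ 2 ≤ cγ * dInner d (βplus - β) (βplus - β) := by
      have h3 := c1_le_dInner d c₁ (fun i => (hd i).1) (βplus - β)
      have h4 : γ * L ≤ c₁ := by
        rw [le_div_iff₀ hL] at hγL; linarith
      have h5 : (0:ℝ) ≤ ‖βplus - β‖ ^ 2 := sq_nonneg _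
      rw [hcγ, show (1:ℝ) / (2 * γ) * dInner d (βplus - β) (βplus - β)
            = dInner d (βplus - β) (βplus - β) / (2 * γ) by ring,
          le_div_iff₀ (by positivity : (0:ℝ) < 2 * γ)]
      nlinarith [mul_nonneg (by linarith : (0:ℝ) ≤ c₁ - γ * L) h5]
    rw [hHinner]
    linarith
  have hconvh : h β + dInner d H (βstar - β) ≤ h βstar := by
    rw [hHinner]
    exact convex_grad_ineq h h' hh hdiff β βstar
  -- assemble
  have hA := hopt βstar
  have hz1 : dInner d (βplus - z) (βstar - βplus)
      = dInner d (βplus - β) (βstar - βplus) + γ * dInner d Gd (βstar - βplus) := by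
    have hzz : βplus - z = (βplus - β) + γ • Gd := by rw [hz]; abel
    rw [hzz]
    have expand : dInner d ((βplus - β) + γ • Gd) (βstar - βplus)
        = dInner d (βplus - β) (βstar - βplus) + dInner d (γ • Gd) (βstar - βplus) := by
      have hsub := dInner_sub_left d ((βplus - β) + γ • Gd) (γ • Gd) (βstar - βplus)
      simp only [add_sub_cancel_right] at hsub
      linarith
    rw [expand, dInner_smul_left]
  rw [hz1] at hA
  rw [dNorm_sq d hd0, dNorm_sq d hd0]
  set u : EuclideanSpace ℝ (Fin p) := βplus - βstar with hu
  set X : ℝ := dInner d (βplus - β) u with hX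
  set TG : ℝ := dInner d Gd u with hTG
  set TH : ℝ := dInner d H u with hTH
  have e3 : dInner d (βplus - β) (βstar - βplus) = -X := by
    rw [hX, hu]
    have h1 := dInner_sub_right d (βplus - β) βstar βplus
    have h2 := dInner_sub_right d (βplus - β) βplus βstar
    linarith
  have e4 : dInner d Gd (βstar - βplus) = -TG := by
    rw [hTG, hu]
    have h1 := dInner_sub_right d Gd βstar βplus
    have h2 := dInner_sub_right d Gd βplus βstar
    linarith
  rw [e3, e4] at hA
  -- step 1 : prox optimality, scaled by γ
  have step1 : γ * g βplus - γ * g βstar ≤ -X - γ * TG := by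
    have h0 : 0 ≤ γ * (g βstar - g βplus + 2 * cγ * (-X + γ * -TG)) :=
      mul_nonneg hγ.le hA
    have he : γ * (g βstar - g βplus + 2 * cγ * (-X + γ * -TG))
        = γ * g βstar - γ * g βplus - X - γ * TG := by
      rw [hcγ]; field_simp; ring
    linarith
  -- step 2 : descent lemma, scaled by 2γ
  have step2 : 2 * γ * h βplus ≤ 2 * γ * h β + 2 * γ * dInner d H (βplus - β)
      + dInner d (βplus - β) (βplus - β) := by
    have h0 := mul_le_mul_of_nonneg_left hdesc (by positivity : (0:ℝ) ≤ 2 * γ)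
    have he : 2 * γ * (h β + dInner d H (βplus - β)
          + cγ * dInner d (βplus - β) (βplus - β))
        = 2 * γ * h β + 2 * γ * dInner d H (βplus - β)
          + dInner d (βplus - β) (βplus - β) := by
      rw [hcγ]; field_simp
    linarith
  -- step 3 : convexity of h, scaled by 2γ
  have step3 : 2 * γ * h β + 2 * γ * dInner d H (βstar - β) ≤ 2 * γ * h βstar := by
    have h0 := mul_le_mul_of_nonneg_left hconvh (by positivity : (0:ℝ) ≤ 2 * γ)
    linarith [h0, show 2 * γ * (h β + dInner d H (βstar - β))
        = 2 * γ * h β + 2 * γ * dInner d H (βstar - β) from by ring]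
  -- linear identities
  have e5 : dInner d H (βplus - β) - dInner d H (βstar - β) = TH := by
    rw [hTH, hu]
    have h1 := dInner_sub_right d H βplus β
    have h2 := dInner_sub_right d H βstar β
    have h3 := dInner_sub_right d H βplus βstar
    linarith
  have e5' : 2 * γ * dInner d H (βplus - β) - 2 * γ * dInner d H (βstar - β)
      = 2 * γ * TH := by linear_combination (2 * γ) * e5
  have h3pt := dInner_three d β βplus βstar
  have e6 : dInner d (β - βplus) (βplus - βstar) = -X := by
    rw [hX]
    have h1 := dInner_sub_left d β βplus u
    have h2 := dInner_sub_left d βplus β u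
    rw [hu] at h1 h2
    linarith
  have e7 : dInner d u (Gd - H) = TG - TH := by
    rw [hTG, hTH, dInner_sub_right, dInner_comm d u Gd, dInner_comm d u H]
  have e8 : dInner d (βplus - β) (βplus - β) = dInner d (β - βplus) (β - βplus) :=
    dInner_flip d βplus β
  rw [e7]
  linarith [step1, step2, step3, e5', h3pt, e6, e8]
end

section
/- Let p ≥ 1, let h : ℝ^p → ℝ be differentiable with ∇h Lipschitz continuous with constant L > 0 (Euclidean norm), let g : ℝ^p → ℝ be convex, let D be a p×p diagonal matrix whose diagonal entries all lie in [c₁, c₂] with 0 < c₁ ≤ c₂, and let γ > 0. For β ∈ ℝ^p let T_γ(β) denote a minimizer over ℝ^p of x ↦ g(x) + (1/(2γ)) ‖x − (β − γ D⁻¹ ∇h(β))‖_D². Then for all β, β' ∈ ℝ^p, ‖T_γ(β) − T_γ(β')‖ ≤ √(c₂/c₁) · (1 + γL/c₁) · ‖β − β'‖ (Euclidean norms). -/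
open scoped BigOperators
open MeasureTheory Filter

open scoped RealInnerProductSpace

noncomputable def Wmap {p : ℕ} (d : Fin p → ℝ) (x : EuclideanSpace ℝ (Fin p)) :
    EuclideanSpace ℝ (Fin p) :=
  WithLp.toLp 2 (fun i => Real.sqrt (d i) * x i)

lemma Wmap_apply {p : ℕ} (d : Fin p → ℝ) (x : EuclideanSpace ℝ (Fin p)) (i : Fin p) :
    Wmap d x i = Real.sqrt (d i) * x i := rfl

lemma Wmap_sub {p : ℕ} (d : Fin p → ℝ) (x y : EuclideanSpace ℝ (Fin p)) :
    Wmap d (x - y) = Wmap d x - Wmap d y := by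
  ext i
  simp only [Wmap, PiLp.sub_apply, PiLp.toLp_apply]
  ring

lemma Wmap_add {p : ℕ} (d : Fin p → ℝ) (x y : EuclideanSpace ℝ (Fin p)) :
    Wmap d (x + y) = Wmap d x + Wmap d y := by
  ext i
  simp only [Wmap, PiLp.add_apply, PiLp.toLp_apply]
  ring

lemma Wmap_neg {p : ℕ} (d : Fin p → ℝ) (x : EuclideanSpace ℝ (Fin p)) :
    Wmap d (-x) = -(Wmap d x) := by
  ext i
  simp only [Wmap, PiLp.neg_apply, PiLp.toLp_apply]
  ring

lemma Wmap_smul {p : ℕ} (d : Fin p → ℝ) (c : ℝ) (x : EuclideanSpace ℝ (Fin p)) :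
    Wmap d (c • x) = c • Wmap d x := by
  ext i
  simp only [Wmap, PiLp.smul_apply, smul_eq_mul, PiLp.toLp_apply]
  ring

lemma dNorm_eq_norm {p : ℕ} (d : Fin p → ℝ) (hd : ∀ i, 0 ≤ d i) (x : EuclideanSpace ℝ (Fin p)) :
    dNorm d x = ‖Wmap d x‖ := by
  rw [dNorm, dInner, EuclideanSpace.norm_eq]
  congr 1
  refine Finset.sum_congr rfl fun i _ => ?_
  rw [Wmap_apply, Real.norm_eq_abs, sq_abs, mul_pow, Real.sq_sqrt (hd i)]
  ring

lemma norm_le_sqrt_mul_norm {p : ℕ} (x y : EuclideanSpace ℝ (Fin p)) (K : ℝ) (hK : 0 ≤ K)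
    (h : ∀ i, (x i) ^ 2 ≤ K * (y i) ^ 2) : ‖x‖ ≤ Real.sqrt K * ‖y‖ := by
  rw [EuclideanSpace.norm_eq, EuclideanSpace.norm_eq, ← Real.sqrt_mul hK]
  apply Real.sqrt_le_sqrt
  rw [Finset.mul_sum]
  refine Finset.sum_le_sum fun i _ => ?_
  simpa [Real.norm_eq_abs, sq_abs] using h i

lemma aux_le_of_forall (C K : ℝ) (hK : 0 ≤ K)
    (h : ∀ t : ℝ, 0 < t → t ≤ 1 → C ≤ t * K) : C ≤ 0 := by
  by_contra hC
  push_neg at hC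
  rcases hK.eq_or_lt with hK0 | hKpos
  · have h1 := h 1 one_pos le_rfl
    rw [← hK0] at h1
    simp at h1
    linarith
  · have hKne : K ≠ 0 := ne_of_gt hKpos
    have ht0 : 0 < min 1 (C / (2 * K)) := lt_min one_pos (by positivity)
    have h1 := h _ ht0 (min_le_left _ _)
    have h2 : min 1 (C / (2 * K)) * K ≤ (C / (2 * K)) * K :=
      mul_le_mul_of_nonneg_right (min_le_right _ _) hK
    have h3 : (C / (2 * K)) * K = C / 2 := by field_simp
    linarith

set_option maxHeartbeats 1000000

/-- For `h` differentiable with L-Lipschitz gradient, `g` convex, `D` diagonal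
with entries in `[c₁, c₂]` and `γ > 0`, the proximal-gradient operator
`T_γ(β) = Prox_{γ,g}^D(β − γ D⁻¹∇h(β))` satisfies
`‖T_γ(β) − T_γ(β')‖ ≤ √(c₂/c₁) (1 + γL/c₁) ‖β − β'‖` for all `β, β'`. -/
theorem stmt_7 {p : ℕ} (hp : 1 ≤ p)
    (h g : EuclideanSpace ℝ (Fin p) → ℝ)
    (h' : EuclideanSpace ℝ (Fin p) → EuclideanSpace ℝ (Fin p))
    (hdiff : ∀ x, HasGradientAt h (h' x) x)
    (L : ℝ) (hL : 0 < L)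
    (hlip : ∀ x y : EuclideanSpace ℝ (Fin p), ‖h' x - h' y‖ ≤ L * ‖x - y‖)
    (hg : ConvexOn ℝ Set.univ g)
    (c₁ c₂ : ℝ) (hc₁ : 0 < c₁) (hc₁₂ : c₁ ≤ c₂)
    (d : Fin p → ℝ) (hd : ∀ i, d i ∈ Set.Icc c₁ c₂)
    (γ : ℝ) (hγ : 0 < γ)
    (T : EuclideanSpace ℝ (Fin p) → EuclideanSpace ℝ (Fin p))
    (hT : ∀ b x : EuclideanSpace ℝ (Fin p),
      g (T b) + (1 / (2 * γ)) * (dNorm d (T b - (b - γ • dInvMul d (h' b)))) ^ 2 ≤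
        g x + (1 / (2 * γ)) * (dNorm d (x - (b - γ • dInvMul d (h' b)))) ^ 2) :
    ∀ β β' : EuclideanSpace ℝ (Fin p),
      ‖T β - T β'‖ ≤ Real.sqrt (c₂ / c₁) * (1 + γ * L / c₁) * ‖β - β'‖ := by
  have hγne : γ ≠ 0 := ne_of_gt hγ
  have hd0 : ∀ i, 0 ≤ d i := fun i => le_trans hc₁.le (hd i).1
  have hdpos : ∀ i, 0 < d i := fun i => lt_of_lt_of_le hc₁ (hd i).1
  -- Key variational inequality for the prox minimizer
  have key : ∀ b x : EuclideanSpace ℝ (Fin p),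
      g (T b) ≤ g x +
        (1 / γ) * ⟪Wmap d (T b - (b - γ • dInvMul d (h' b))), Wmap d (x - T b)⟫ := by
    intro b x
    set c : ℝ := 1 / (2 * γ) with hc
    set u : EuclideanSpace ℝ (Fin p) := b - γ • dInvMul d (h' b) with hu
    set v : EuclideanSpace ℝ (Fin p) := Wmap d (T b - u) with hv
    set w : EuclideanSpace ℝ (Fin p) := Wmap d (x - T b) with hw
    have hcpos : 0 < c := by rw [hc]; positivity
    have hB : (0:ℝ) ≤ c * ‖w‖ ^ 2 := by positivity
    have hstep : ∀ t : ℝ, 0 < t → t ≤ 1 →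
        g (T b) - (g x + c * (2 * ⟪v, w⟫)) ≤ t * (c * ‖w‖ ^ 2) := by
      intro t ht ht1
      have hxt := hT b (T b + t • (x - T b))
      rw [← hu] at hxt
      have e1 : (T b + t • (x - T b)) - u = (T b - u) + t • (x - T b) := by module
      have e2 : dNorm d ((T b + t • (x - T b)) - u) = ‖v + t • w‖ := by
        rw [e1, dNorm_eq_norm d hd0, Wmap_add, Wmap_smul, ← hv, ← hw]
      have e3 : dNorm d (T b - u) = ‖v‖ := by rw [dNorm_eq_norm d hd0, ← hv]
      rw [e2, e3] at hxt
      have hconv : g (T b + t • (x - T b)) ≤ g (T b) + t * (g x - g (T b)) := by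
        have h2 := hg.2 (Set.mem_univ (T b)) (Set.mem_univ x)
          (by linarith : (0:ℝ) ≤ 1 - t) ht.le (by ring)
        have heq : (1 - t) • (T b) + t • x = T b + t • (x - T b) := by module
        rw [heq] at h2
        simp only [smul_eq_mul] at h2
        linarith
      have hn : ‖v + t • w‖ ^ 2 = ‖v‖ ^ 2 + 2 * (t * ⟪v, w⟫) + t ^ 2 * ‖w‖ ^ 2 := by
        rw [norm_add_sq_real, real_inner_smul_right, norm_smul, Real.norm_eq_abs,
          mul_pow, sq_abs]
      have hexp : c * ‖v + t • w‖ ^ 2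
          = c * ‖v‖ ^ 2 + t * (c * (2 * ⟪v, w⟫)) + t ^ 2 * (c * ‖w‖ ^ 2) := by
        rw [hn]; ring
      rw [hexp] at hxt
      have hmul : t * (g (T b) - (g x + c * (2 * ⟪v, w⟫))) ≤ t * (t * (c * ‖w‖ ^ 2)) := by
        nlinarith [hxt, hconv]
      exact le_of_mul_le_mul_left hmul ht
    have hC := aux_le_of_forall _ _ hB hstep
    have hI : c * (2 * ⟪v, w⟫) = (1 / γ) * ⟪v, w⟫ := by rw [hc]; ring
    linarith
  intro β β'
  have k1 := key β (T β')
  have k2 := key β' (T β)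
  set a : EuclideanSpace ℝ (Fin p) := T β with ha
  set b' : EuclideanSpace ℝ (Fin p) := T β' with hb'
  set uβ : EuclideanSpace ℝ (Fin p) := β - γ • dInvMul d (h' β) with huβ
  set uβ' : EuclideanSpace ℝ (Fin p) := β' - γ • dInvMul d (h' β') with huβ'
  set I₁ : ℝ := ⟪Wmap d (a - uβ), Wmap d (b' - a)⟫ with hI₁
  set I₂ : ℝ := ⟪Wmap d (b' - uβ'), Wmap d (a - b')⟫ with hI₂
  set P : EuclideanSpace ℝ (Fin p) := Wmap d (a - b') with hP
  set Q : EuclideanSpace ℝ (Fin p) := Wmap d (uβ - uβ') with hQ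
  -- 0 ≤ I₁ + I₂
  have h0 : 0 ≤ I₁ + I₂ := by
    have h1 : 0 ≤ (1 / γ) * I₁ + (1 / γ) * I₂ := by linarith
    have h2 : 0 ≤ γ * ((1 / γ) * I₁ + (1 / γ) * I₂) := mul_nonneg hγ.le h1
    have h3 : γ * ((1 / γ) * I₁ + (1 / γ) * I₂) = I₁ + I₂ := by field_simp
    linarith
  -- identity : I₁ + I₂ = ⟪Q, P⟫ - ‖P‖²
  have hid : I₁ + I₂ = ⟪Q, P⟫ - ‖P‖ ^ 2 := by
    rw [hI₁, hI₂, hP, hQ]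
    have e1 : a - uβ = ((a - b') - (uβ - uβ')) + (b' - uβ') := by abel
    have e2 : b' - a = -(a - b') := by abel
    rw [e1, e2, Wmap_add, Wmap_sub, Wmap_neg]
    simp only [inner_neg_right, inner_add_left, inner_sub_left, real_inner_self_eq_norm_sq]
    ring
  have hPQle : ‖P‖ ^ 2 ≤ ⟪Q, P⟫ := by linarith
  have hPle : ‖P‖ ≤ ‖Q‖ := by
    by_cases hP0 : ‖P‖ = 0
    · rw [hP0]; exact norm_nonneg Q
    · have hPpos : 0 < ‖P‖ := (norm_nonneg P).lt_of_ne (Ne.symm hP0)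
      nlinarith [real_inner_le_norm Q P]
  -- bound on ‖Q‖
  have hΔ : uβ - uβ' = (β - β') - γ • dInvMul d (h' β - h' β') := by
    rw [huβ, huβ']
    have hdinv : dInvMul d (h' β - h' β') = dInvMul d (h' β) - dInvMul d (h' β') := by
      ext i
      simp only [dInvMul, PiLp.sub_apply, PiLp.toLp_apply]
      ring
    rw [hdinv]
    module
  have hQbound : ‖Q‖ ≤ Real.sqrt c₂ * ‖β - β'‖ + γ * (Real.sqrt c₁⁻¹ * (L * ‖β - β'‖)) := by
    rw [hQ, hΔ, Wmap_sub, Wmap_smul]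
    refine le_trans (norm_sub_le _ _) ?_
    have b1 : ‖Wmap d (β - β')‖ ≤ Real.sqrt c₂ * ‖β - β'‖ := by
      apply norm_le_sqrt_mul_norm _ _ _ (le_trans hc₁.le hc₁₂)
      intro i
      rw [Wmap_apply, mul_pow, Real.sq_sqrt (hd0 i)]
      exact mul_le_mul_of_nonneg_right (hd i).2 (sq_nonneg _)
    have b2 : ‖Wmap d (dInvMul d (h' β - h' β'))‖ ≤ Real.sqrt c₁⁻¹ * ‖h' β - h' β'‖ := by
      apply norm_le_sqrt_mul_norm _ _ _ (by positivity)
      intro i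
      have hdi := hdpos i
      have hap : Wmap d (dInvMul d (h' β - h' β')) i
          = Real.sqrt (d i) * ((d i)⁻¹ * (h' β - h' β') i) := rfl
      rw [hap, mul_pow, mul_pow, Real.sq_sqrt (hd0 i)]
      have hform : d i * (((d i)⁻¹) ^ 2 * ((h' β - h' β') i) ^ 2)
          = (d i)⁻¹ * ((h' β - h' β') i) ^ 2 := by
        field_simp
      rw [hform]
      have hle : (d i)⁻¹ ≤ c₁⁻¹ := inv_anti₀ hc₁ (hd i).1
      exact mul_le_mul_of_nonneg_right hle (sq_nonneg _)
    have b3 : ‖h' β - h' β'‖ ≤ L * ‖β - β'‖ := hlip β β'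
    have hsm : ‖γ • Wmap d (dInvMul d (h' β - h' β'))‖
        = γ * ‖Wmap d (dInvMul d (h' β - h' β'))‖ := by
      rw [norm_smul, Real.norm_eq_abs, abs_of_pos hγ]
    rw [hsm]
    have hs1nn : (0:ℝ) ≤ Real.sqrt c₁⁻¹ := Real.sqrt_nonneg _
    have b2' := le_trans b2 (mul_le_mul_of_nonneg_left b3 hs1nn)
    have := mul_le_mul_of_nonneg_left b2' hγ.le
    linarith
  -- lower bound: ‖a - b'‖ ≤ √c₁⁻¹ ‖P‖
  have hlow : ‖a - b'‖ ≤ Real.sqrt c₁⁻¹ * ‖P‖ := by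
    rw [hP]
    apply norm_le_sqrt_mul_norm _ _ _ (by positivity)
    intro i
    rw [Wmap_apply, mul_pow, Real.sq_sqrt (hd0 i)]
    have h1 : 1 ≤ c₁⁻¹ * d i := by
      calc (1:ℝ) = c₁⁻¹ * c₁ := (inv_mul_cancel₀ hc₁.ne').symm
        _ ≤ c₁⁻¹ * d i := mul_le_mul_of_nonneg_left (hd i).1 (by positivity)
    calc ((a - b') i) ^ 2 = 1 * ((a - b') i) ^ 2 := (one_mul _).symm
      _ ≤ (c₁⁻¹ * d i) * ((a - b') i) ^ 2 := mul_le_mul_of_nonneg_right h1 (sq_nonneg _)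
      _ = c₁⁻¹ * (d i * ((a - b') i) ^ 2) := by ring
  have hfinal : ‖a - b'‖ ≤ Real.sqrt c₁⁻¹ *
      (Real.sqrt c₂ * ‖β - β'‖ + γ * (Real.sqrt c₁⁻¹ * (L * ‖β - β'‖))) :=
    le_trans hlow (le_trans (mul_le_mul_of_nonneg_left hPle (Real.sqrt_nonneg _))
      (mul_le_mul_of_nonneg_left hQbound (Real.sqrt_nonneg _)))
  -- arithmetic
  have hs : Real.sqrt c₁⁻¹ * Real.sqrt c₂ = Real.sqrt (c₂ / c₁) := by
    rw [← Real.sqrt_mul (by positivity), inv_mul_eq_div]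
  have hs2 : Real.sqrt c₁⁻¹ * Real.sqrt c₁⁻¹ = c₁⁻¹ := Real.mul_self_sqrt (by positivity)
  have hone : 1 ≤ Real.sqrt (c₂ / c₁) := by
    rw [show (1:ℝ) = Real.sqrt 1 from Real.sqrt_one.symm]
    exact Real.sqrt_le_sqrt ((one_le_div hc₁).mpr hc₁₂)
  have hexpand : Real.sqrt c₁⁻¹ *
      (Real.sqrt c₂ * ‖β - β'‖ + γ * (Real.sqrt c₁⁻¹ * (L * ‖β - β'‖)))
      = Real.sqrt (c₂ / c₁) * ‖β - β'‖ + γ * L / c₁ * ‖β - β'‖ := by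
    have e1 : Real.sqrt c₁⁻¹ * (Real.sqrt c₂ * ‖β - β'‖)
        = Real.sqrt (c₂ / c₁) * ‖β - β'‖ := by
      linear_combination ‖β - β'‖ * hs
    have e2 : Real.sqrt c₁⁻¹ * (γ * (Real.sqrt c₁⁻¹ * (L * ‖β - β'‖)))
        = γ * L / c₁ * ‖β - β'‖ := by
      linear_combination (γ * L * ‖β - β'‖) * hs2
    rw [mul_add, e1, e2]
  rw [hexpand] at hfinal
  have hnn : (0:ℝ) ≤ ‖β - β'‖ := norm_nonneg _
  have hm : (0:ℝ) ≤ γ * L / c₁ := by positivity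
  nlinarith [hfinal, hone, hnn, hm,
    mul_nonneg (mul_nonneg (sub_nonneg.mpr hone) hm) hnn]
end
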